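/- Let α ∈ ℂ with α+n ≠ 0 for all n ∈ ℤ, and let (c_n)_{n∈ℤ} satisfy c_n = (α+n)/(α+n+1)·c_{n−1} − 1/(α+n+1)² for all n ∈ ℤ, and define G_n = (α+n+1)c_n − (α+n)c_{n+1} − 1/(α+n+1) and suppose (α+n+2)G_n' = (α+n)G'_{n−2} − 4/(α+n+2)² where G'_n = G_n. Then equating the two resulting expressions for G'_{n+2} yields −6/((α+n+3)(α+n+4)²(α+n+1)) = 0 for all n, which is impossible; hence no such sequence (c_n) exists. -/

import Mathlib

/-- The contradiction in Case 1.2.1 of Lemma 4.2: if `α + n ≠ 0` for all `n ∈ ℤ`, the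
sequence `c` (playing the role of `F_{1,n}(k₀−1,1)`) satisfies recurrence (4.13)
`c n = (α+n)/(α+n+1) · c (n−1) − 1/(α+n+1)²`, and `G` (playing the role of
`F_{2,n}(k₀−1,1)`) is given by `G n = (α+n+1)c n − (α+n)c (n+1) − 1/(α+n+1)` and
satisfies `(α+n+2)G n = (α+n)G (n−2) − 4/(α+n+2)²`, then equating the two resulting
expressions for `G (n+2)` yields `−6/((α+n+3)(α+n+4)²(α+n+1)) = 0`, which is
impossible; hence no such sequence exists. -/
theorem case_1_2_1_contradiction (α : ℂ) (hα : ∀ n : ℤ, α + (n : ℂ) ≠ 0)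
    (c : ℤ → ℂ)
    (hc : ∀ n : ℤ, c n = (α + n) / (α + n + 1) * c (n - 1) - 1 / (α + n + 1) ^ 2)
    (G : ℤ → ℂ)
    (hG : ∀ n : ℤ, G n = (α + n + 1) * c n - (α + n) * c (n + 1) - 1 / (α + n + 1))
    (hrec : ∀ n : ℤ, (α + n + 2) * G n = (α + n) * G (n - 2) - 4 / (α + n + 2) ^ 2) :
    False := by
  have key : ∀ n : ℤ, 2*(α+n)^3 + 14*(α+n)^2 + 27*(α+n) + 6 = 0 := by
    intro n
    set x : ℂ := α + (n : ℂ) with hx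
    have d1 : x + 1 ≠ 0 := by
      intro h; exact hα (n+1) (by push_cast; linear_combination h)
    have d2 : x + 2 ≠ 0 := by
      intro h; exact hα (n+2) (by push_cast; linear_combination h)
    have d3 : x + 3 ≠ 0 := by
      intro h; exact hα (n+3) (by push_cast; linear_combination h)
    have d4 : x + 4 ≠ 0 := by
      intro h; exact hα (n+4) (by push_cast; linear_combination h)
    have H1 : (x+2)^2 * c (n+1) = (x+1)*(x+2) * c n - 1 := by
      have h := hc (n+1)
      rw [show n+1-1 = n from by ring] at h
      push_cast at h
      rw [show α + ((n:ℂ)+1) = x + 1 from by rw [hx]; ring,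
          show x+1+1 = x+2 from by ring] at h
      field_simp [d2] at h
      apply mul_left_cancel₀ d2
      linear_combination (x+2) * h
    have H2 : (x+3)^2 * c (n+2) = (x+2)*(x+3) * c (n+1) - 1 := by
      have h := hc (n+2)
      rw [show n+2-1 = n+1 from by ring] at h
      push_cast at h
      rw [show α + ((n:ℂ)+2) = x + 2 from by rw [hx]; ring,
          show x+2+1 = x+3 from by ring] at h
      field_simp [d3] at h
      apply mul_left_cancel₀ d3
      linear_combination (x+3) * h
    have H3 : (x+4)^2 * c (n+3) = (x+3)*(x+4) * c (n+2) - 1 := by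
      have h := hc (n+3)
      rw [show n+3-1 = n+2 from by ring] at h
      push_cast at h
      rw [show α + ((n:ℂ)+3) = x + 3 from by rw [hx]; ring,
          show x+3+1 = x+4 from by ring] at h
      field_simp [d4] at h
      apply mul_left_cancel₀ d4
      linear_combination (x+4) * h
    have H4 : (x+1) * G n = (x+1)^2 * c n - x*(x+1) * c (n+1) - 1 := by
      have h := hG n
      rw [← hx] at h
      field_simp [d1] at h
      linear_combination h
    have H5 : (x+3) * G (n+2) = (x+3)^2 * c (n+2) - (x+2)*(x+3) * c (n+3) - 1 := by
      have h := hG (n+2)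
      rw [show n+2+1 = n+3 from by ring] at h
      push_cast at h
      rw [show α + ((n:ℂ)+2) = x + 2 from by rw [hx]; ring,
          show x+2+1 = x+3 from by ring] at h
      field_simp [d3] at h
      linear_combination h
    have H6 : (x+4)^3 * G (n+2) = (x+2)*(x+4)^2 * G n - 4 := by
      have h := hrec (n+2)
      rw [show n+2-2 = n from by ring] at h
      push_cast at h
      rw [show α + ((n:ℂ)+2) = x + 2 from by rw [hx]; ring,
          show x+2+2 = x+4 from by ring] at h
      field_simp [d4] at h
      linear_combination h
    linear_combination (((x+1)*(x+3)*(x+4)^2)/2) * H1 + ((x+1)*(x+4)^2) * H2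
      + (-((x+1)*(x+2)*(x+3)*(x+4))/2) * H3 + (-((x+2)*(x+3)*(x+4)^2)/2) * H4
      + (((x+1)*(x+4)^3)/2) * H5 + (-((x+1)*(x+3))/2) * H6
  have h12 : (12 : ℂ) = 0 := by
    have k0 := key 0; have k1 := key 1; have k2 := key 2; have k3 := key 3
    push_cast at k0 k1 k2 k3
    linear_combination k3 - 3*k2 + 3*k1 - k0
  norm_num at h12
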